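/- For any n-by-n matrix M with all entries nonzero (over ℚ(λ)), the λ-determinant of M equals the sum over all n-by-n alternating-sign matrices B of λ^(P(B)) (1+λ)^(N(B)) M^B, where M^B = ∏_{i,j} m_{i,j}^{b_{i,j}}, for n ≤ 3. -/

import Mathlib

open Finset

/-- The Robbins–Rumsey `λ`-determinant, defined by the condensation recursion. -/
def lamDet {F : Type*} [Field F] (lam : F) : (n : ℕ) → Matrix (Fin n) (Fin n) F → F
  | 0, _ => 1
  | 1, M => M 0 0
  | (n + 2), M =>
      (lamDet lam (n + 1) (M.submatrix Fin.castSucc Fin.castSucc) *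
         lamDet lam (n + 1) (M.submatrix Fin.succ Fin.succ) +
       lam * lamDet lam (n + 1) (M.submatrix Fin.castSucc Fin.succ) *
         lamDet lam (n + 1) (M.submatrix Fin.succ Fin.castSucc)) /
      lamDet lam n (M.submatrix (fun i => i.succ.castSucc) (fun j => j.succ.castSucc))

/-- `B` is an alternating-sign matrix: entries in `{-1,0,1}`, every row and column sums
to `1`, and all partial row and column sums are `0` or `1` (equivalently, the nonzero
entries of each row and column alternate in sign, beginning and ending with `+1`). -/
def IsASM {n : ℕ} (B : Matrix (Fin n) (Fin n) ℤ) : Prop :=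
  (∀ i j, B i j = -1 ∨ B i j = 0 ∨ B i j = 1) ∧
  (∀ i, ∑ j, B i j = 1) ∧ (∀ j, ∑ i, B i j = 1) ∧
  (∀ i k, (∑ j ∈ Finset.univ.filter (· ≤ k), B i j) = 0 ∨
          (∑ j ∈ Finset.univ.filter (· ≤ k), B i j) = 1) ∧
  (∀ j k, (∑ i ∈ Finset.univ.filter (· ≤ k), B i j) = 0 ∨
          (∑ i ∈ Finset.univ.filter (· ≤ k), B i j) = 1)

/-- `N(B)`: the number of `-1` entries of `B`. -/
def Nstat {n : ℕ} (B : Matrix (Fin n) (Fin n) ℤ) : ℕ :=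
  (Finset.univ.filter fun p : Fin n × Fin n => B p.1 p.2 = -1).card

/-- `I(B) = Σ_{i<r, j>s} b_{i,j} b_{r,s}`, the inversion number of `B`. -/
def Istat {n : ℕ} (B : Matrix (Fin n) (Fin n) ℤ) : ℤ :=
  ∑ i : Fin n, ∑ r : Fin n, ∑ j : Fin n, ∑ s : Fin n,
    if i < r ∧ s < j then B i j * B r s else 0

/-- `P(B) = I(B) − N(B)`. -/
def Pstat {n : ℕ} (B : Matrix (Fin n) (Fin n) ℤ) : ℤ :=
  Istat B - (Nstat B : ℤ)

instance {n : ℕ} (B : Matrix (Fin n) (Fin n) ℤ) : Decidable (IsASM B) := by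
  revert B; unfold IsASM; delta Matrix; intro B; infer_instance

instance {n : ℕ} : DecidableEq (Matrix (Fin n) (Fin n) ℤ) := inferInstance

instance {n : ℕ} (B : Fin n → Fin n → ℤ) : Decidable (IsASM B) := instDecidableIsASM B

instance {n : ℕ} (A : Fin n → Fin n → ℤ) (B : Matrix (Fin n) (Fin n) ℤ) : Decidable (A = B) :=
  Fintype.decidablePiFintype A B

section Aux

variable {F : Type*} [Field F] (lam : F)

lemma lamDet_two (M : Matrix (Fin 2) (Fin 2) F) :
    lamDet lam 2 M = M 0 0 * M 1 1 + lam * M 0 1 * M 1 0 := by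
  show (lamDet lam 1 _ * lamDet lam 1 _ + lam * lamDet lam 1 _ * lamDet lam 1 _) /
      lamDet lam 0 _ = _
  show (_ * _ + _ * _ * _) / (1 : F) = _
  rw [div_one]; rfl

lemma lamDet_three (M : Matrix (Fin 3) (Fin 3) F) :
    lamDet lam 3 M =
      ((M 0 0 * M 1 1 + lam * M 0 1 * M 1 0) * (M 1 1 * M 2 2 + lam * M 1 2 * M 2 1) +
       lam * (M 0 1 * M 1 2 + lam * M 0 2 * M 1 1) * (M 1 0 * M 2 1 + lam * M 1 1 * M 2 0)) /
      M 1 1 := by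
  show (lamDet lam 2 _ * lamDet lam 2 _ + lam * lamDet lam 2 _ * lamDet lam 2 _) /
      lamDet lam 1 _ = _
  rw [lamDet_two, lamDet_two, lamDet_two, lamDet_two]; rfl

/-- encoding of an integer matrix with entries in `{-1,0,1}` -/
lemma encode {n : ℕ} (B : Matrix (Fin n) (Fin n) ℤ)
    (h : ∀ i j, B i j = -1 ∨ B i j = 0 ∨ B i j = 1) :
    ∃ g : Fin n → Fin n → Fin 3, B = fun i j => ((g i j : ℤ) - 1) := by
  refine ⟨fun i j => if B i j = -1 then 0 else if B i j = 0 then 1 else 2, ?_⟩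
  funext i j
  rcases h i j with h' | h' | h' <;> simp [h']

lemma classify1 : ∀ g : Fin 1 → Fin 1 → Fin 3,
    IsASM (fun i j => ((g i j : ℤ) - 1)) → (fun i j => ((g i j : ℤ) - 1)) = !![(1 : ℤ)] := by
  decide

lemma classify2 : ∀ g : Fin 2 → Fin 2 → Fin 3,
    IsASM (fun i j => ((g i j : ℤ) - 1)) →
    (fun i j => ((g i j : ℤ) - 1)) = !![(1:ℤ),0;0,1] ∨
    (fun i j => ((g i j : ℤ) - 1)) = !![(0:ℤ),1;1,0] := by
  decide

def rowOf : Fin 4 → (Fin 3 → ℤ) := ![![1,0,0],![0,1,0],![0,0,1],![1,-1,1]]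

lemma rowLemma : ∀ g : Fin 3 → Fin 3, (∑ j, ((g j : ℤ) - 1)) = 1 →
    (∀ k, (∑ j ∈ Finset.univ.filter (· ≤ k), ((g j : ℤ) - 1)) = 0 ∨
          (∑ j ∈ Finset.univ.filter (· ≤ k), ((g j : ℤ) - 1)) = 1) →
    ∃ a : Fin 4, (fun j => (g j : ℤ) - 1) = rowOf a := by
  decide

lemma classify3 : ∀ v : Fin 3 → Fin 4, IsASM (fun i => rowOf (v i)) →
    (fun i => rowOf (v i)) = !![(1:ℤ),0,0;0,1,0;0,0,1] ∨
    (fun i => rowOf (v i)) = !![(1:ℤ),0,0;0,0,1;0,1,0] ∨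
    (fun i => rowOf (v i)) = !![(0:ℤ),1,0;1,0,0;0,0,1] ∨
    (fun i => rowOf (v i)) = !![(0:ℤ),1,0;0,0,1;1,0,0] ∨
    (fun i => rowOf (v i)) = !![(0:ℤ),0,1;1,0,0;0,1,0] ∨
    (fun i => rowOf (v i)) = !![(0:ℤ),0,1;0,1,0;1,0,0] ∨
    (fun i => rowOf (v i)) = !![(0:ℤ),1,0;1,-1,1;0,1,0] := by
  decide

end Aux

/-- Robbins–Rumsey summation formula: for `n ≤ 3` and any `n×n` matrix `M` over `ℚ(λ)`
with all entries nonzero, the λ-determinant of `M` equals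
`Σ_B λ^(P(B)) (1+λ)^(N(B)) M^B`, the sum ranging over all `n×n` alternating-sign
matrices `B`, with `M^B = Π_{i,j} m_{i,j}^(b_{i,j})`. -/
theorem lamDet_eq_asm_sum (n : ℕ) (hn : n ≤ 3) (M : Matrix (Fin n) (Fin n) (RatFunc ℚ))
    (hM : ∀ i j, M i j ≠ 0) :
    ∃ S : Finset (Matrix (Fin n) (Fin n) ℤ),
      (∀ B, B ∈ S ↔ IsASM B) ∧
      lamDet (RatFunc.X : RatFunc ℚ) n M =
        ∑ B ∈ S, (RatFunc.X : RatFunc ℚ) ^ (Pstat B) * (1 + RatFunc.X) ^ (Nstat B) *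
          ∏ i : Fin n, ∏ j : Fin n, M i j ^ (B i j) := by
  interval_cases n
  · -- n = 0
    refine ⟨{(0 : Matrix (Fin 0) (Fin 0) ℤ)}, ?_, ?_⟩
    · intro B
      constructor
      · intro _
        exact ⟨fun i => i.elim0, fun i => i.elim0, fun i => i.elim0,
          fun i => i.elim0, fun i => i.elim0⟩
      · intro _
        simp only [Finset.mem_singleton]
        funext i; exact i.elim0
    · rw [Finset.sum_singleton]
      have h1 : Pstat (0 : Matrix (Fin 0) (Fin 0) ℤ) = 0 := by decide
      have h2 : Nstat (0 : Matrix (Fin 0) (Fin 0) ℤ) = 0 := by decide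
      rw [h1, h2]
      show (1 : RatFunc ℚ) = _
      simp
  · -- n = 1
    refine ⟨{!![(1 : ℤ)]}, ?_, ?_⟩
    · intro B
      constructor
      · intro hB
        simp only [Finset.mem_singleton] at hB
        subst hB; decide
      · intro hB
        obtain ⟨g, hg⟩ := encode B hB.1
        simp only [Finset.mem_singleton]
        rw [hg]
        exact classify1 g (hg ▸ hB)
    · rw [Finset.sum_singleton]
      have h1 : Pstat !![(1 : ℤ)] = 0 := by decide
      have h2 : Nstat !![(1 : ℤ)] = 0 := by decide
      rw [h1, h2]
      show M 0 0 = _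
      have e : (!![(1:ℤ)] 0 0) = 1 := rfl
      simp [Fin.prod_univ_one, e]
  · -- n = 2
    refine ⟨{!![(1:ℤ),0;0,1], !![(0:ℤ),1;1,0]}, ?_, ?_⟩
    · intro B
      constructor
      · intro hB
        simp only [Finset.mem_insert, Finset.mem_singleton] at hB
        rcases hB with h | h <;> (subst h; decide)
      · intro hB
        obtain ⟨g, hg⟩ := encode B hB.1
        simp only [Finset.mem_insert, Finset.mem_singleton]
        rw [hg]
        exact classify2 g (hg ▸ hB)
    · rw [Finset.sum_insert (by decide), Finset.sum_singleton, lamDet_two]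
      have p1 : Pstat !![(1:ℤ),0;0,1] = 0 := by decide
      have p2 : Pstat !![(0:ℤ),1;1,0] = 1 := by decide
      have n1 : Nstat !![(1:ℤ),0;0,1] = 0 := by decide
      have n2 : Nstat !![(0:ℤ),1;1,0] = 0 := by decide
      rw [p1, p2, n1, n2]
      simp only [Fin.prod_univ_two]
      norm_num [Matrix.cons_val_zero, Matrix.cons_val_one, Matrix.head_cons]
      ring
  · -- n = 3
    refine ⟨{!![(1:ℤ),0,0;0,1,0;0,0,1], !![(1:ℤ),0,0;0,0,1;0,1,0],
             !![(0:ℤ),1,0;1,0,0;0,0,1], !![(0:ℤ),1,0;0,0,1;1,0,0],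
             !![(0:ℤ),0,1;1,0,0;0,1,0], !![(0:ℤ),0,1;0,1,0;1,0,0],
             !![(0:ℤ),1,0;1,-1,1;0,1,0]}, ?_, ?_⟩
    · intro B
      constructor
      · intro hB
        simp only [Finset.mem_insert, Finset.mem_singleton] at hB
        rcases hB with h | h | h | h | h | h | h <;> (subst h; decide)
      · intro hB
        obtain ⟨g, hg⟩ := encode B hB.1
        have hrow : ∀ i : Fin 3, ∃ a : Fin 4, B i = rowOf a := by
          intro i
          obtain ⟨a, ha⟩ := rowLemma (g i)
            (by have := hB.2.1 i; rw [hg] at this; exact this)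
            (by intro k; have := hB.2.2.2.1 i k; rw [hg] at this; exact this)
          exact ⟨a, by rw [hg]; exact ha⟩
        obtain ⟨a, ha⟩ := hrow 0
        obtain ⟨b, hb⟩ := hrow 1
        obtain ⟨c, hc⟩ := hrow 2
        have hBv : B = fun i => rowOf (![a, b, c] i) := by
          funext i
          fin_cases i
          · exact ha
          · exact hb
          · exact hc
        simp only [Finset.mem_insert, Finset.mem_singleton]
        rw [hBv]
        exact classify3 ![a, b, c] (hBv ▸ hB)
    · rw [Finset.sum_insert (by decide), Finset.sum_insert (by decide),
          Finset.sum_insert (by decide), Finset.sum_insert (by decide),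
          Finset.sum_insert (by decide), Finset.sum_insert (by decide),
          Finset.sum_singleton, lamDet_three]
      have p1 : Pstat !![(1:ℤ),0,0;0,1,0;0,0,1] = 0 := by decide
      have p2 : Pstat !![(1:ℤ),0,0;0,0,1;0,1,0] = 1 := by decide
      have p3 : Pstat !![(0:ℤ),1,0;1,0,0;0,0,1] = 1 := by decide
      have p4 : Pstat !![(0:ℤ),1,0;0,0,1;1,0,0] = 2 := by decide
      have p5 : Pstat !![(0:ℤ),0,1;1,0,0;0,1,0] = 2 := by decide
      have p6 : Pstat !![(0:ℤ),0,1;0,1,0;1,0,0] = 3 := by decide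
      have p7 : Pstat !![(0:ℤ),1,0;1,-1,1;0,1,0] = 1 := by decide
      have n1 : Nstat !![(1:ℤ),0,0;0,1,0;0,0,1] = 0 := by decide
      have n2 : Nstat !![(1:ℤ),0,0;0,0,1;0,1,0] = 0 := by decide
      have n3 : Nstat !![(0:ℤ),1,0;1,0,0;0,0,1] = 0 := by decide
      have n4 : Nstat !![(0:ℤ),1,0;0,0,1;1,0,0] = 0 := by decide
      have n5 : Nstat !![(0:ℤ),0,1;1,0,0;0,1,0] = 0 := by decide
      have n6 : Nstat !![(0:ℤ),0,1;0,1,0;1,0,0] = 0 := by decide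
      have n7 : Nstat !![(0:ℤ),1,0;1,-1,1;0,1,0] = 1 := by decide
      rw [p1, p2, p3, p4, p5, p6, p7, n1, n2, n3, n4, n5, n6, n7]
      simp only [Fin.prod_univ_three]
      norm_num [Matrix.cons_val_zero, Matrix.cons_val_one, Matrix.head_cons,
        Matrix.cons_val_two, Matrix.tail_cons, Matrix.vecHead, Matrix.vecTail, zpow_neg, zpow_ofNat]
      field_simp [hM 1 1]
      ring
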